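/- Let D be odd, π : V_D → V'_D = V_D/𝔽η_D the quotient map, and 𝒻'(V_D) = 𝒻(V_{D-1}) ∪ {E ∈ 𝒻(V_D) \ 𝒻(V_{D-1}) : dim E < (D−1)/2}. Then E ↦ π(E) is a bijection from 𝒻'(V_D) onto 𝒻(V'_D) := {π(E) : E ∈ 𝒻(V_D)}. -/

import Mathlib

open Finset

abbrev Vec := ℕ →₀ ZMod 2

/-- The basis vector `e_i`. -/
noncomputable def e (i : ℕ) : Vec := Finsupp.single i 1

/-- For an interval `p = (a,b)` (representing `[a,b]`), the vector `e_I = ∑_{i∈[a,b]} e_i`. -/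
noncomputable def eI (p : ℕ × ℕ) : Vec := ∑ j ∈ Finset.Icc p.1 p.2, e j

/-- The map `ξ_i` on intervals. -/
def tint (i : ℕ) (p : ℕ × ℕ) : ℕ × ℕ :=
  if i ≤ p.1 then (p.1 + 2, p.2 + 2)
  else if p.2 + 2 ≤ i then p
  else (p.1, p.2 + 2)

/-- The map `t_i` on sets of intervals: `t_i(B') = ξ_i(B') ∪ {[i,i]}`. -/
def tmap (i : ℕ) (B : Finset (ℕ × ℕ)) : Finset (ℕ × ℕ) :=
  B.image (tint i) ∪ {(i, i)}

/-- The inductively defined family `S_D`. -/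
inductive IsS : ℕ → Finset (ℕ × ℕ) → Prop
  | empty (D : ℕ) : IsS D ∅
  | one : IsS 1 {(1, 1)}
  | step (D i : ℕ) (B' : Finset (ℕ × ℕ)) (h1 : 1 ≤ i) (h2 : i ≤ D + 2)
      (h : IsS D B') : IsS (D + 2) (tmap i B')

def primEven (D k : ℕ) : Finset (ℕ × ℕ) := (Finset.Icc 1 k).image fun j => (j, D + 1 - j)
def primOddA (D k : ℕ) : Finset (ℕ × ℕ) := (Finset.Icc 1 k).image fun j => (j, D - j)
def primOddB (D k : ℕ) : Finset (ℕ × ℕ) := (Finset.Icc 1 k).image fun j => (j + 1, D + 1 - j)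

/-- The primitive elements of `𝕊_D`. -/
def IsPrim (D : ℕ) (B : Finset (ℕ × ℕ)) : Prop :=
  B = ∅ ∨
  (Even D ∧ ∃ k, 1 ≤ k ∧ k ≤ D / 2 ∧ B = primEven D k) ∨
  (Odd D ∧ ∃ k, Odd k ∧ 1 ≤ k ∧ k ≤ (D - 1) / 2 ∧ (B = primOddA D k ∨ B = primOddB D k))

/-- The inductively defined family `𝕊_D`. -/
inductive IsSS : ℕ → Finset (ℕ × ℕ) → Prop
  | prim (D : ℕ) (B : Finset (ℕ × ℕ)) : IsPrim D B → IsSS D B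
  | one : IsSS 1 {(1, 1)}
  | step (D i : ℕ) (B' : Finset (ℕ × ℕ)) (h1 : 1 ≤ i) (h2 : i ≤ D + 2)
      (h : IsSS D B') : IsSS (D + 2) (tmap i B')

/-- The subspace `𝔼_B` spanned by the `e_I`, `I ∈ B`. -/
noncomputable def EB (B : Finset (ℕ × ℕ)) : Submodule (ZMod 2) Vec :=
  Submodule.span (ZMod 2) (eI '' (B : Set (ℕ × ℕ)))

/-- Two intervals are non-touching. -/
def Nontouch (p q : ℕ × ℕ) : Prop := p.2 + 2 ≤ q.1 ∨ q.2 + 2 ≤ p.1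

/-- `p ≺ q`: `p = [a,b]` is strictly nested inside `q = [a',b']`, i.e. `a' < a ≤ b < b'`. -/
def Nested (p q : ℕ × ℕ) : Prop := q.1 < p.1 ∧ p.1 ≤ p.2 ∧ p.2 < q.2

/-- `η_D = e_1 + e_3 + ⋯ + e_D` (`D` odd). -/
noncomputable def eta (D : ℕ) : Vec := ∑ j ∈ (Finset.Icc 1 D).filter (fun j => j % 2 = 1), e j

noncomputable def Tfun (i k : ℕ) : Vec :=
  if k + 1 < i then e k
  else if k + 1 = i then e k + e (k + 1) + e (k + 2)
  else e (k + 2)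

/-- The linear map `T_i : V_{D-2} → V_D`. -/
noncomputable def Tlin (i : ℕ) : Vec →ₗ[ZMod 2] Vec :=
  Finsupp.linearCombination (ZMod 2) (Tfun i)

/-- The inductively defined family `𝒻(V_D)` of subspaces. -/
inductive IsF : ℕ → Submodule (ZMod 2) Vec → Prop
  | zero (D : ℕ) : IsF D ⊥
  | one : IsF 1 (Submodule.span (ZMod 2) {e 1})
  | step (D i : ℕ) (E' : Submodule (ZMod 2) Vec) (h1 : 1 ≤ i) (h2 : i ≤ D + 2)
      (h : IsF D E') :
      IsF (D + 2) (Submodule.map (Tlin i) E' ⊔ Submodule.span (ZMod 2) {e i})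

/-- The subspace `V_D = ⟨e_1,…,e_D⟩`. -/
noncomputable def VD (D : ℕ) : Submodule (ZMod 2) Vec :=
  Submodule.span (ZMod 2) (e '' Set.Icc 1 D)

/-- The symplectic form with `(e_i,e_j) = 1` iff `|i-j| = 1`. -/
noncomputable def symp (x y : Vec) : ZMod 2 :=
  x.sum fun i xi => xi * (y (i + 1) + if 1 ≤ i then y (i - 1) else 0)



section Coord
variable {i j k : ℕ}

lemma e_apply (k j : ℕ) : (e k) j = if k = j then 1 else 0 := Finsupp.single_apply

lemma eI_apply (a b j : ℕ) : (eI (a, b)) j = if a ≤ j ∧ j ≤ b then 1 else 0 := by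
  simp only [eI, Finsupp.finset_sum_apply, e_apply, Finset.sum_ite_eq', Finset.mem_Icc]

lemma eta_apply (D j : ℕ) : (eta D) j = if 1 ≤ j ∧ j ≤ D ∧ j % 2 = 1 then 1 else 0 := by
  simp only [eta, Finsupp.finset_sum_apply, e_apply, Finset.sum_ite_eq', Finset.mem_filter,
    Finset.mem_Icc]
  split_ifs with h1 h2 h2 <;> tauto

/-- position-source function for `T_i`. -/
def sig (i j : ℕ) : ℕ := if j + 1 < i then j else if j ≤ i + 1 then i - 1 else j - 2

lemma Tfun_apply (hi : 1 ≤ i) (k j : ℕ) : (Tfun i k) j = if k = sig i j then 1 else 0 := by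
  unfold Tfun sig
  split_ifs with h1 h2 h3 h4 h5 h6 h7 h8 h9 h10 h11 h12 h13 h14 <;>
    simp only [Finsupp.add_apply, e_apply] <;> split_ifs <;> first | rfl | omega

lemma Tlin_apply (hi : 1 ≤ i) (x : Vec) (j : ℕ) : (Tlin i x) j = x (sig i j) := by
  rw [Tlin, Finsupp.linearCombination_apply, Finsupp.sum_apply]
  have h1 : (Finsupp.sum x fun a b => (b • Tfun i a) j)
      = x.sum fun a b => if a = sig i j then b else 0 :=
    Finsupp.sum_congr
      (fun k _ => by rw [Finsupp.smul_apply, Tfun_apply hi, smul_eq_mul, mul_ite, mul_one, mul_zero])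
  rw [h1, Finsupp.sum_ite_eq']
  split_ifs with h
  · rfl
  · exact (Finsupp.notMem_support_iff.mp h).symm

end Coord
section Alg
variable {i j k a b D : ℕ}

lemma sig_probe (hi : 1 ≤ i) (k : ℕ) : ∃ p, sig i p = k ∧ (e i) p = 0 := by
  refine ⟨if k + 1 < i then k else if k + 1 = i then k else k + 2, ?_, ?_⟩
  · unfold sig; split_ifs <;> omega
  · rw [e_apply]; split_ifs <;> first | rfl | omega

lemma Tcancel (hi : 1 ≤ i) {x y : Vec} {c d : ZMod 2}
    (h : Tlin i x + c • e i = Tlin i y + d • e i) : x = y ∧ c = d := by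
  have key : ∀ j, x (sig i j) + c * (e i) j = y (sig i j) + d * (e i) j := by
    intro j
    have := congrArg (fun v : Vec => v j) h
    simpa [Finsupp.add_apply, Finsupp.smul_apply, Tlin_apply hi, smul_eq_mul] using this
  have hxy : x = y := by
    ext k
    obtain ⟨p, hp1, hp2⟩ := sig_probe hi k
    have hk := key p
    rwa [hp1, hp2, mul_zero, mul_zero, add_zero, add_zero] at hk
  refine ⟨hxy, ?_⟩
  have hk := key i
  rw [hxy, e_apply, if_pos rfl, mul_one, mul_one] at hk
  exact add_left_cancel hk

lemma Tinj (hi : 1 ≤ i) : Function.Injective (Tlin i) := by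
  intro x y h
  exact (Tcancel hi (c := 0) (d := 0) (by simpa using h)).1

lemma Tlin_ne_e (hi : 1 ≤ i) (x : Vec) : Tlin i x ≠ e i := by
  intro h
  have h1 := congrArg (fun v : Vec => v (i-1)) h
  have h2 := congrArg (fun v : Vec => v i) h
  simp only [Tlin_apply hi, e_apply] at h1 h2
  have s1 : sig i (i-1) = i - 1 := by unfold sig; split_ifs <;> omega
  have s2 : sig i i = i - 1 := by unfold sig; split_ifs <;> omega
  rw [s1] at h1
  rw [s2] at h2
  rw [if_neg (by omega)] at h1
  simp only [if_pos rfl, if_true] at h2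
  rw [h1] at h2
  exact one_ne_zero h2.symm

lemma eta_step (hD : Odd D) (hi1 : 1 ≤ i) (hi2 : i ≤ D + 2) :
    eta (D + 2) = Tlin i (eta D) + e i := by
  obtain ⟨m, hm⟩ := hD
  ext j
  simp only [Finsupp.add_apply, Tlin_apply hi1, eta_apply, e_apply, sig]
  split_ifs <;> first | rfl | omega | decide | (exfalso; omega)

lemma eta_add2 (hD : Odd D) : eta (D + 2) = eta D + e (D + 2) := by
  obtain ⟨m, hm⟩ := hD
  ext j
  simp only [Finsupp.add_apply, eta_apply, e_apply]
  split_ifs <;> first | rfl | omega | decide | (exfalso; omega)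

lemma eI_diag (i : ℕ) : eI (i, i) = e i := by
  rw [eI]; simp

lemma Tlin_eI (hi : 1 ≤ i) {p : ℕ × ℕ} (hab : p.1 ≤ p.2) :
    Tlin i (eI p) = eI (tint i p) := by
  obtain ⟨a, b⟩ := p
  simp only at hab
  ext j
  simp only [Tlin_apply hi, tint, sig]
  split_ifs <;> simp only [eI_apply] <;> split_ifs <;> first | rfl | omega | (exfalso; omega)
end Alg
section Struct
variable {i D : ℕ} {B : Finset (ℕ × ℕ)}

lemma EB_empty : EB ∅ = ⊥ := by simp [EB]

lemma eI_mem_EB {p : ℕ × ℕ} (hp : p ∈ B) : eI p ∈ EB B :=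
  Submodule.subset_span ⟨p, hp, rfl⟩

lemma IsS_bounds (h : IsS D B) : ∀ p ∈ B, 1 ≤ p.1 ∧ p.1 ≤ p.2 ∧ p.2 ≤ D := by
  induction h with
  | empty D => simp
  | one =>
    intro p hp
    rw [Finset.mem_singleton] at hp
    subst hp; exact ⟨le_rfl, le_rfl, le_rfl⟩
  | step D i B' h1 h2 h ih =>
    intro p hp
    rw [tmap, Finset.mem_union] at hp
    rcases hp with hp | hp
    · obtain ⟨⟨a, b⟩, hq, rfl⟩ := Finset.mem_image.mp hp
      obtain ⟨hq1, hq2, hq3⟩ := ih _ hq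
      unfold tint; split_ifs <;> dsimp only at * <;> refine ⟨by omega, by omega, by omega⟩
    · rw [Finset.mem_singleton] at hp
      subst hp; exact ⟨h1, le_rfl, h2⟩

lemma tint_inj (i : ℕ) : Function.Injective (tint i) := by
  rintro ⟨a, b⟩ ⟨c, d⟩ h
  unfold tint at h
  split_ifs at h <;> simp only [Prod.mk.injEq] at h ⊢ <;> omega

lemma diag_not_mem_image : (i, i) ∉ B.image (tint i) := by
  rw [Finset.mem_image]
  rintro ⟨⟨a, b⟩, hmem, h⟩
  unfold tint at h
  split_ifs at h <;> simp only [Prod.mk.injEq] at h <;> omega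

lemma card_tmap : (tmap i B).card = B.card + 1 := by
  rw [tmap, Finset.card_union_of_disjoint
    (by rw [Finset.disjoint_singleton_right]; exact diag_not_mem_image),
    Finset.card_image_of_injective _ (tint_inj i), Finset.card_singleton]

lemma EB_step (hi : 1 ≤ i) (hB : ∀ p ∈ B, p.1 ≤ p.2) :
    EB (tmap i B) = Submodule.map (Tlin i) (EB B) ⊔ Submodule.span (ZMod 2) {e i} := by
  rw [tmap, EB, Finset.coe_union, Finset.coe_image, Finset.coe_singleton, Set.image_union,
    Submodule.span_union]
  congr 1
  · rw [EB, Submodule.map_span, ← Set.image_comp, ← Set.image_comp]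
    congr 1
    apply Set.image_congr
    intro p hp
    exact (Tlin_eI hi (hB p hp)).symm
  · rw [Set.image_singleton, eI_diag]

lemma IsS_mono (h : IsS D B) : IsS (D + 1) B := by
  induction h with
  | empty D => exact IsS.empty _
  | one =>
    have h0 : ({((1:ℕ), (1:ℕ))} : Finset (ℕ × ℕ)) = tmap 1 ∅ := by decide
    rw [h0]
    exact IsS.step 0 1 ∅ le_rfl (by omega) (IsS.empty 0)
  | step D i B' h1 h2 h ih =>
    have h0 : D + 2 + 1 = D + 1 + 2 := by omega
    rw [h0]
    exact IsS.step (D+1) i B' h1 (by omega) ih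

lemma IsS_card (h : IsS D B) : B.card ≤ (D + 1) / 2 := by
  induction h with
  | empty => simp
  | one => simp
  | step D i B' h1 h2 h ih => rw [card_tmap]; omega

lemma EB_coord {m : ℕ} (hB : ∀ p ∈ B, p.2 < m) : ∀ x ∈ EB B, x m = 0 := by
  intro x hx
  induction hx using Submodule.span_induction with
  | mem v hv =>
    obtain ⟨⟨a, b⟩, hp, rfl⟩ := hv
    rw [eI_apply, if_neg]
    have := hB _ hp
    simp only at this
    omega
  | zero => rfl
  | add x y _ _ hx hy => rw [Finsupp.add_apply, hx, hy, add_zero]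
  | smul c x _ hx => rw [Finsupp.smul_apply, hx, smul_eq_mul, mul_zero]

lemma mem_map_sup {W : Submodule (ZMod 2) Vec} {v : Vec}
    (h : v ∈ Submodule.map (Tlin i) W ⊔ Submodule.span (ZMod 2) {e i}) :
    ∃ x ∈ W, ∃ c : ZMod 2, v = Tlin i x + c • e i := by
  rw [Submodule.mem_sup] at h
  obtain ⟨y, hy, z, hz, rfl⟩ := h
  obtain ⟨x, hx, rfl⟩ := hy
  obtain ⟨c, rfl⟩ := Submodule.mem_span_singleton.mp hz
  exact ⟨x, hx, c, rfl⟩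

lemma add_self_vec (w : Vec) : w + w = 0 := by
  have h2 : (2 : ZMod 2) = 0 := by decide
  calc w + w = (2 : ZMod 2) • w := (two_smul _ w).symm
  _ = 0 := by rw [h2, zero_smul]

lemma sup_span_add {U : Submodule (ZMod 2) Vec} {u v : Vec} (hu : u ∈ U) :
    U ⊔ Submodule.span (ZMod 2) {v + u} = U ⊔ Submodule.span (ZMod 2) {v} := by
  apply le_antisymm
  · apply sup_le le_sup_left
    rw [Submodule.span_le, Set.singleton_subset_iff]
    exact Submodule.add_mem _
      (Submodule.mem_sup_right (Submodule.mem_span_singleton_self v))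
      (Submodule.mem_sup_left hu)
  · apply sup_le le_sup_left
    rw [Submodule.span_le, Set.singleton_subset_iff]
    have hm : (v + u) + u ∈ U ⊔ Submodule.span (ZMod 2) {v + u} := Submodule.add_mem _
      (Submodule.mem_sup_right (Submodule.mem_span_singleton_self (v + u)))
      (Submodule.mem_sup_left hu)
    rwa [add_assoc, add_self_vec, add_zero] at hm

lemma sup_eta_step (hD : Odd D) (hi1 : 1 ≤ i) (hi2 : i ≤ D + 2) (W : Submodule (ZMod 2) Vec) :
    (Submodule.map (Tlin i) W ⊔ Submodule.span (ZMod 2) {e i})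
        ⊔ Submodule.span (ZMod 2) {eta (D+2)}
      = Submodule.map (Tlin i) (W ⊔ Submodule.span (ZMod 2) {eta D})
        ⊔ Submodule.span (ZMod 2) {e i} := by
  rw [eta_step hD hi1 hi2,
    sup_span_add (Submodule.mem_sup_right (Submodule.mem_span_singleton_self _)),
    Submodule.map_sup, Submodule.map_span, Set.image_singleton, sup_right_comm]

end Struct
section Corr
variable {i D : ℕ} {B : Finset (ℕ × ℕ)} {E : Submodule (ZMod 2) Vec}

lemma EB_pair1 : EB {((1:ℕ), (1:ℕ))} = Submodule.span (ZMod 2) {e 1} := by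
  rw [EB, Finset.coe_singleton, Set.image_singleton, eI_diag]

lemma IsF_of_IsS (h : IsS D B) : IsF D (EB B) := by
  induction h with
  | empty D => rw [EB_empty]; exact IsF.zero D
  | one => rw [EB_pair1]; exact IsF.one
  | step D i B' h1 h2 h ih =>
    rw [EB_step h1 (fun p hp => (IsS_bounds h p hp).2.1)]
    exact IsF.step D i _ h1 h2 ih

lemma IsF_exists (h : IsF D E) : ∃ B, IsS D B ∧ E = EB B := by
  induction h with
  | zero D => exact ⟨∅, IsS.empty D, EB_empty.symm⟩
  | one => exact ⟨{(1,1)}, IsS.one, EB_pair1.symm⟩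
  | step D i E' h1 h2 h ih =>
    obtain ⟨B', hB', rfl⟩ := ih
    exact ⟨tmap i B', IsS.step D i B' h1 h2 hB',
      (EB_step h1 (fun p hp => (IsS_bounds hB' p hp).2.1)).symm⟩

lemma fd_EB (B : Finset (ℕ × ℕ)) : FiniteDimensional (ZMod 2) (EB B) :=
  FiniteDimensional.span_of_finite _ ((B : Set (ℕ × ℕ)).toFinite.image eI)

lemma zmod2_cases : ∀ c : ZMod 2, c = 0 ∨ c = 1 := by decide

lemma finrank_sup_singleton {P : Submodule (ZMod 2) Vec} [FiniteDimensional (ZMod 2) P]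
    {v : Vec} (hv : v ∉ P) (hv0 : v ≠ 0) :
    Module.finrank (ZMod 2) ↥(P ⊔ Submodule.span (ZMod 2) {v})
      = Module.finrank (ZMod 2) P + 1 := by
  have hinf : P ⊓ Submodule.span (ZMod 2) {v} = ⊥ := by
    rw [eq_bot_iff]
    rintro x ⟨hxP, hxs⟩
    obtain ⟨c, rfl⟩ := Submodule.mem_span_singleton.mp hxs
    rcases zmod2_cases c with rfl | rfl
    · rw [zero_smul]; exact Submodule.zero_mem _
    · rw [one_smul] at hxP; exact absurd hxP hv
  have := Submodule.finrank_sup_add_finrank_inf_eq P (Submodule.span (ZMod 2) {v})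
  rw [hinf, finrank_bot, add_zero, finrank_span_singleton hv0] at this
  exact this

lemma e_ne_zero (i : ℕ) : e i ≠ 0 := by
  intro h
  have := congrArg (fun v : Vec => v i) h
  simp only [e_apply, if_pos rfl, Finsupp.coe_zero, Pi.zero_apply] at this
  exact one_ne_zero this

lemma findim_EB (h : IsS D B) : Module.finrank (ZMod 2) (EB B) = B.card := by
  induction h with
  | empty D => rw [EB_empty, Finset.card_empty, finrank_bot]
  | one => rw [EB_pair1, Finset.card_singleton, finrank_span_singleton (e_ne_zero 1)]
  | step D i B' h1 h2 h ih =>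
    rw [EB_step h1 (fun p hp => (IsS_bounds h p hp).2.1), card_tmap]
    haveI := fd_EB B'
    haveI : FiniteDimensional (ZMod 2) (Submodule.map (Tlin i) (EB B')) :=
      Module.Finite.map _ _
    have hnot : e i ∉ Submodule.map (Tlin i) (EB B') := by
      rintro ⟨x, _, hx⟩
      exact Tlin_ne_e h1 x hx
    rw [finrank_sup_singleton hnot (e_ne_zero i), ← ih]
    congr 1
    exact ((Submodule.equivMapOfInjective (Tlin i) (Tinj h1) (EB B')).finrank_eq).symm

lemma odd_of_odd2 {D : ℕ} (h : Odd (D + 2)) : Odd D := by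
  rcases h with ⟨m, hm⟩; exact ⟨m - 1, by omega⟩

lemma eta_not_mem (h : IsS D B) (hD : Odd D) (hcard : B.card < (D+1)/2) : eta D ∉ EB B := by
  induction h with
  | empty D =>
    intro hmem
    rw [EB_empty, Submodule.mem_bot] at hmem
    have hD1 : 1 ≤ D := hD.pos
    have h1 : (eta D) 1 = (0 : ZMod 2) := by rw [hmem]; rfl
    rw [eta_apply, if_pos (show 1 ≤ 1 ∧ 1 ≤ D ∧ 1 % 2 = 1 by omega)] at h1
    exact one_ne_zero h1
  | one => simp at hcard
  | step D i B' h1 h2 h ih =>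
    intro hmem
    have hD' : Odd D := odd_of_odd2 hD
    rw [EB_step h1 (fun p hp => (IsS_bounds h p hp).2.1)] at hmem
    obtain ⟨x, hx, c, hc⟩ := mem_map_sup hmem
    rw [eta_step hD' h1 h2] at hc
    have hT := Tcancel h1 (x := eta D) (y := x) (c := 1) (d := c) (by rw [one_smul]; exact hc)
    exact ih hD' (by rw [card_tmap] at hcard; omega) (by rw [hT.1]; exact hx)

lemma eta1_eq : eta 1 = e 1 := by
  ext j; rw [eta_apply, e_apply]; split_ifs <;> first | rfl | omega

lemma adjoin (h : IsS D B) (hD : Even D) (hcard : B.card = D / 2) :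
    ∃ C, IsS (D + 2) C ∧ EB C = EB B ⊔ Submodule.span (ZMod 2) {eta (D+1)} := by
  induction h with
  | empty D =>
    have hD0 : D = 0 := by rcases hD with ⟨m, hm⟩; simp at hcard; omega
    subst hD0
    refine ⟨{(1,1)}, ?_, ?_⟩
    · have h0 : ({((1:ℕ), (1:ℕ))} : Finset (ℕ × ℕ)) = tmap 1 ∅ := by decide
      rw [h0]; exact IsS.step 0 1 ∅ le_rfl (by omega) (IsS.empty 0)
    · rw [EB_empty, bot_sup_eq, EB_pair1, eta1_eq]
  | one => exact absurd hD (by decide)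
  | step D i B' h1 h2 h ih =>
    have hD' : Even D := by rcases hD with ⟨m, hm⟩; exact ⟨m - 1, by omega⟩
    have hc' : B'.card = D / 2 := by
      rw [card_tmap] at hcard; rcases hD' with ⟨m, hm⟩; omega
    obtain ⟨C, hC, hEC⟩ := ih hD' hc'
    refine ⟨tmap i C, IsS.step (D+2) i C h1 (by omega) hC, ?_⟩
    rw [EB_step h1 (fun p hp => (IsS_bounds hC p hp).2.1), hEC,
        EB_step h1 (fun p hp => (IsS_bounds h p hp).2.1)]
    have hodd : Odd (D + 1) := Even.add_one hD'
    have hst := sup_eta_step hodd h1 (by omega) (EB B')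
    have e3 : D + 2 + 1 = D + 1 + 2 := by omega
    rw [e3, ← hst]
end Corr
section Rec
variable {i D : ℕ} {B : Finset (ℕ × ℕ)}

def probe (i k : ℕ) : ℕ := if k + 1 < i then k else if k + 1 = i then k else k + 2

lemma probe_sig (hi : 1 ≤ i) (k : ℕ) : sig i (probe i k) = k := by
  unfold probe sig; split_ifs <;> omega

lemma probe_e (hi : 1 ≤ i) (k : ℕ) : (e i) (probe i k) = 0 := by
  unfold probe; rw [e_apply]; split_ifs <;> first | rfl | omega

lemma extract (h1 : 1 ≤ i) {x : Vec} {c : ZMod 2} {a b : ℕ} (hab : a ≤ b)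
    (hc : eI (a, b) = Tlin i x + c • e i) (hno : ¬(a = i ∧ b = i)) :
    ∃ a' b', a' ≤ b' ∧ x = eI (a', b') ∧ tint i (a', b') = (a, b) := by
  have key : ∀ j, (eI (a, b)) j = x (sig i j) + c * (e i) j := by
    intro j
    have := congrArg (fun v : Vec => v j) hc
    simpa [Finsupp.add_apply, Finsupp.smul_apply, Tlin_apply h1, smul_eq_mul] using this
  have keyx : ∀ k, x k = (eI (a, b)) (probe i k) := by
    intro k
    have kk := key (probe i k)
    rw [probe_sig h1, probe_e h1, mul_zero, add_zero] at kk
    exact kk.symm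
  have hcons : (eI (a, b)) (i - 1) = (eI (a, b)) (i + 1) := by
    have k1 := key (i - 1)
    have k2 := key (i + 1)
    have s1 : sig i (i - 1) = i - 1 := by unfold sig; split_ifs <;> omega
    have s2 : sig i (i + 1) = i - 1 := by unfold sig; split_ifs <;> omega
    rw [s1, e_apply, if_neg (by omega), mul_zero, add_zero] at k1
    rw [s2, e_apply, if_neg (by omega), mul_zero, add_zero] at k2
    rw [k1, k2]
  by_cases hb2 : b + 2 ≤ i
  · refine ⟨a, b, hab, ?_, ?_⟩
    · ext k
      rw [keyx, eI_apply, eI_apply]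
      unfold probe; split_ifs <;> first | rfl | omega | (exfalso; omega)
    · unfold tint; split_ifs <;> simp only [Prod.mk.injEq, true_and, and_true] at * <;> omega
  · by_cases ha2 : i + 2 ≤ a
    · refine ⟨a - 2, b - 2, by omega, ?_, ?_⟩
      · ext k
        rw [keyx, eI_apply, eI_apply]
        unfold probe; split_ifs <;> first | rfl | omega | (exfalso; omega)
      · unfold tint; split_ifs <;> simp only [Prod.mk.injEq, true_and, and_true] at * <;> omega
    · by_cases hmid : a ≤ i - 1 ∧ i + 1 ≤ b
      · obtain ⟨hm1, hm2⟩ := hmid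
        refine ⟨a, b - 2, by omega, ?_, ?_⟩
        · ext k
          rw [keyx, eI_apply, eI_apply]
          unfold probe; split_ifs <;> first | rfl | omega | (exfalso; omega)
        · unfold tint; split_ifs <;> simp only [Prod.mk.injEq, true_and, and_true] at * <;> omega
      · exfalso
        rw [eI_apply, eI_apply] at hcons
        split_ifs at hcons <;>
          first | omega | exact one_ne_zero hcons | exact one_ne_zero hcons.symm

lemma rec_lemma (h : IsS D B) (hD : Odd D) (hcard : B.card < (D - 1) / 2) :
    ∀ a b : ℕ, a ≤ b → eI (a, b) ∈ EB B ⊔ Submodule.span (ZMod 2) {eta D} → (a, b) ∈ B := by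
  induction h with
  | empty D =>
    intro a b hab hmem
    exfalso
    rw [EB_empty, bot_sup_eq] at hmem
    obtain ⟨c, hc⟩ := Submodule.mem_span_singleton.mp hmem
    have hD3 : 3 ≤ D := by
      rcases hD with ⟨m, hm⟩
      simp only [Finset.card_empty] at hcard
      omega
    rcases zmod2_cases c with rfl | rfl
    · rw [zero_smul] at hc
      have t1 : (eI (a, b)) a = (0 : ZMod 2) := by rw [← hc]; rfl
      rw [eI_apply, if_pos ⟨le_rfl, hab⟩] at t1
      exact one_ne_zero t1
    · rw [one_smul] at hc
      have t1 : (eta D) 1 = (eI (a, b)) 1 := by rw [hc]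
      have t2 : (eta D) 2 = (eI (a, b)) 2 := by rw [hc]
      have t3 : (eta D) 3 = (eI (a, b)) 3 := by rw [hc]
      rw [eta_apply, eI_apply] at t1
      rw [eta_apply, eI_apply] at t2
      rw [eta_apply, eI_apply] at t3
      split_ifs at t1 t2 t3 <;>
        first
          | omega
          | tauto
          | exact one_ne_zero t1
          | exact one_ne_zero t1.symm
          | exact one_ne_zero t2
          | exact one_ne_zero t2.symm
          | exact one_ne_zero t3
          | exact one_ne_zero t3.symm
  | one =>
    intro a b hab hmem
    exfalso
    rw [Finset.card_singleton] at hcard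
    omega
  | step D i B' h1 h2 h ih =>
    intro a b hab hmem
    have hD' : Odd D := odd_of_odd2 hD
    rw [EB_step h1 (fun p hp => (IsS_bounds h p hp).2.1), sup_eta_step hD' h1 h2 (EB B')]
      at hmem
    obtain ⟨x, hx, c, hc⟩ := mem_map_sup hmem
    by_cases hii : a = i ∧ b = i
    · rw [tmap, Finset.mem_union, Finset.mem_singleton]
      right; rw [hii.1, hii.2]
    · obtain ⟨a', b', hab', hxeq, htint⟩ := extract h1 hab hc hii
      have hcard' : B'.card < (D - 1) / 2 := by
        rw [card_tmap] at hcard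
        rcases hD' with ⟨m, hm⟩
        omega
      have hmem' : (a', b') ∈ B' := ih hD' hcard' a' b' hab' (by rw [← hxeq]; exact hx)
      rw [tmap, Finset.mem_union]
      left
      rw [Finset.mem_image]
      exact ⟨(a', b'), hmem', htint⟩
end Rec
section Surj
variable {i D : ℕ} {B : Finset (ℕ × ℕ)}

lemma tmap_top (h : IsS D B) : tmap (D + 2) B = B ∪ {(D + 2, D + 2)} := by
  rw [tmap]
  congr 1
  have : ∀ p ∈ B, tint (D + 2) p = id p := by
    intro p hp
    obtain ⟨hp1, hp2, hp3⟩ := IsS_bounds h p hp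
    unfold tint
    rw [if_neg (by omega), if_pos (by omega)]
    rfl
  rw [Finset.image_congr this, Finset.image_id]

lemma EB_union_diag (B : Finset (ℕ × ℕ)) (j : ℕ) :
    EB (B ∪ {(j, j)}) = EB B ⊔ Submodule.span (ZMod 2) {e j} := by
  simp only [EB]
  rw [Finset.coe_union, Set.image_union, Submodule.span_union, Finset.coe_singleton,
    Set.image_singleton, eI_diag]

lemma e_eq_eta_add (hD : Odd D) : e (D + 2) = eta D + eta (D + 2) := by
  rw [eta_add2 hD, ← add_assoc, add_self_vec, zero_add]

lemma hswap (hD : Odd D) (U : Submodule (ZMod 2) Vec) :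
    U ⊔ Submodule.span (ZMod 2) {e (D + 2)} ⊔ Submodule.span (ZMod 2) {eta (D + 2)}
      = U ⊔ Submodule.span (ZMod 2) {eta D} ⊔ Submodule.span (ZMod 2) {eta (D + 2)} := by
  rw [sup_right_comm, e_eq_eta_add hD,
    sup_span_add (Submodule.mem_sup_right (Submodule.mem_span_singleton_self _)),
    sup_right_comm]

lemma surj_lemma (h : IsS D B) (hD : Odd D) :
    ∃ B0, (IsS (D - 1) B0 ∨ (IsS D B0 ∧ B0.card < (D - 1) / 2 ∧ ∃ p ∈ B0, p.2 = D)) ∧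
      EB B0 ⊔ Submodule.span (ZMod 2) {eta D} = EB B ⊔ Submodule.span (ZMod 2) {eta D} := by
  induction h with
  | empty D => exact ⟨∅, Or.inl (IsS.empty _), rfl⟩
  | one =>
    refine ⟨∅, Or.inl (IsS.empty 0), ?_⟩
    rw [EB_empty, EB_pair1, eta1_eq, bot_sup_eq, sup_idem]
  | step D i B' h1 h2 h ih =>
    have hD' : Odd D := odd_of_odd2 hD
    obtain ⟨B0, hside, heq⟩ := ih hD'
    have hd21 : D + 2 - 1 = D + 1 := by omega
    have hd1 : (D + 2 - 1) / 2 = (D - 1) / 2 + 1 := by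
      rcases hD' with ⟨m, hm⟩; omega
    by_cases hi : i ≤ D + 1
    · -- use tmap i B0
      have hbndB' : ∀ p ∈ B', p.1 ≤ p.2 := fun p hp => (IsS_bounds h p hp).2.1
      have hB0S : IsS D B0 := by
        rcases hside with hS | ⟨hS, _⟩
        · have := IsS_mono hS
          rwa [show D - 1 + 1 = D from by rcases hD' with ⟨m, hm⟩; omega] at this
        · exact hS
      have hbndB0 : ∀ p ∈ B0, p.1 ≤ p.2 := fun p hp => (IsS_bounds hB0S p hp).2.1
      have heq2 : EB (tmap i B0) ⊔ Submodule.span (ZMod 2) {eta (D + 2)}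
          = EB (tmap i B') ⊔ Submodule.span (ZMod 2) {eta (D + 2)} := by
        rw [EB_step h1 hbndB0, sup_eta_step hD' h1 h2, heq, ← sup_eta_step hD' h1 h2,
          ← EB_step h1 hbndB']
      refine ⟨tmap i B0, ?_, heq2⟩
      rcases hside with hS | ⟨hS, hcard, p, hp, hpD⟩
      · left
        rw [hd21]
        have := IsS.step (D - 1) i B0 h1 (by omega) hS
        rwa [show D - 1 + 2 = D + 1 from by rcases hD' with ⟨m, hm⟩; omega] at this
      · right
        refine ⟨IsS.step D i B0 h1 (by omega) hS, ?_, ?_⟩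
        · rw [card_tmap, hd1]; omega
        · refine ⟨tint i p, ?_, ?_⟩
          · rw [tmap, Finset.mem_union]
            left
            exact Finset.mem_image_of_mem _ hp
          · have hb := IsS_bounds hB0S p hp
            unfold tint
            split_ifs <;> simp -failIfUnchanged only [Prod.mk.injEq, true_and, and_true] at * <;> omega
    · -- i = D + 2
      have hi2 : i = D + 2 := by omega
      subst hi2
      have htm : tmap (D + 2) B' = B' ∪ {(D + 2, D + 2)} := tmap_top h
      have hmain : EB (tmap (D + 2) B') ⊔ Submodule.span (ZMod 2) {eta (D + 2)}
          = EB B0 ⊔ Submodule.span (ZMod 2) {eta D}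
            ⊔ Submodule.span (ZMod 2) {eta (D + 2)} := by
        rw [htm, EB_union_diag, hswap hD', heq]
      rcases hside with hS | ⟨hS, hcard, p, hp, hpD⟩
      · by_cases hbc : B0.card < (D - 1) / 2
        · -- class2 output, B0 ∪ {(D+2,D+2)}
          have hB0S : IsS D B0 := by
            have := IsS_mono hS
            rwa [show D - 1 + 1 = D from by rcases hD' with ⟨m, hm⟩; omega] at this
          refine ⟨tmap (D + 2) B0, Or.inr ⟨IsS.step D (D + 2) B0 (by omega) (by omega) hB0S,
            ?_, ⟨(D + 2, D + 2), ?_, rfl⟩⟩, ?_⟩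
          · rw [card_tmap, hd1]; omega
          · rw [tmap_top hB0S, Finset.mem_union, Finset.mem_singleton]
            right; rfl
          · rw [tmap_top hB0S, EB_union_diag, hswap hD', hmain]
        · -- adjoin path
          have hbc' : B0.card = (D - 1) / 2 := by
            have hc2 := IsS_card hS
            rcases hD' with ⟨m, hm⟩
            omega
          have hEven : Even (D - 1) := by rcases hD' with ⟨m, hm⟩; exact ⟨m, by omega⟩
          obtain ⟨C, hC, hEC⟩ := adjoin hS hEven (by rcases hD' with ⟨m, hm⟩; omega)
          have hCfix : IsS (D + 1) C := by
            rwa [show D - 1 + 2 = D + 1 from by rcases hD' with ⟨m, hm⟩; omega] at hC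
          have hECfix : EB C = EB B0 ⊔ Submodule.span (ZMod 2) {eta D} := by
            rwa [show D - 1 + 1 = D from by rcases hD' with ⟨m, hm⟩; omega] at hEC
          refine ⟨C, Or.inl (by rw [hd21]; exact hCfix), ?_⟩
          rw [hECfix, hmain]
      · -- class2 input, i = D + 2
        refine ⟨tmap (D + 2) B0, Or.inr ⟨IsS.step D (D + 2) B0 (by omega) (by omega) hS,
          ?_, ⟨(D + 2, D + 2), ?_, rfl⟩⟩, ?_⟩
        · rw [card_tmap, hd1]; omega
        · rw [tmap_top hS, Finset.mem_union, Finset.mem_singleton]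
          right; rfl
        · rw [tmap_top hS, EB_union_diag, hswap hD', hmain]
end Surj
section Final
variable {D : ℕ} {B C : Finset (ℕ × ℕ)} {E : Submodule (ZMod 2) Vec}

lemma etaD_coord (hD : Odd D) : (eta D) D = 1 := by
  rw [eta_apply, if_pos ⟨hD.pos, le_rfl, Nat.odd_iff.mp hD⟩]

lemma eta_nz (hD : Odd D) : eta D ≠ 0 := by
  intro h
  have := congrArg (fun v : Vec => v D) h
  change (eta D) D = (0 : Vec) D at this
  rw [etaD_coord hD] at this
  exact one_ne_zero this

lemma map_mkQ_eq {K E1 E2 : Submodule (ZMod 2) Vec} :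
    Submodule.map K.mkQ E1 = Submodule.map K.mkQ E2 ↔ E1 ⊔ K = E2 ⊔ K := by
  constructor
  · intro h
    have h2 := congrArg (Submodule.comap K.mkQ) h
    rwa [Submodule.comap_map_eq, Submodule.comap_map_eq, Submodule.ker_mkQ] at h2
  · intro h
    have hbot : ∀ E : Submodule (ZMod 2) Vec,
        Submodule.map K.mkQ (E ⊔ K) = Submodule.map K.mkQ E := by
      intro E
      rw [Submodule.map_sup]
      have hK : Submodule.map K.mkQ K = ⊥ := by
        rw [eq_bot_iff]
        rintro x ⟨y, hy, rfl⟩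
        rw [Submodule.mem_bot, Submodule.mkQ_apply, Submodule.Quotient.mk_eq_zero]
        exact hy
      rw [hK, sup_bot_eq]
    rw [← hbot E1, h, hbot E2]

lemma coordD_recover (hD : Odd D) {W1 W2 : Submodule (ZMod 2) Vec}
    (h1 : ∀ x ∈ W1, x D = 0) (h2 : ∀ x ∈ W2, x D = 0)
    (heq : W1 ⊔ Submodule.span (ZMod 2) {eta D} = W2 ⊔ Submodule.span (ZMod 2) {eta D}) :
    W1 = W2 := by
  have main : ∀ U V : Submodule (ZMod 2) Vec, (∀ x ∈ U, x D = 0) → (∀ x ∈ V, x D = 0) →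
      U ⊔ Submodule.span (ZMod 2) {eta D} = V ⊔ Submodule.span (ZMod 2) {eta D} → U ≤ V := by
    intro U V hU hV hEq x hx
    have hx2 : x ∈ V ⊔ Submodule.span (ZMod 2) {eta D} := by
      rw [← hEq]; exact Submodule.mem_sup_left hx
    rw [Submodule.mem_sup] at hx2
    obtain ⟨y, hy, z, hz, hxyz⟩ := hx2
    obtain ⟨c, rfl⟩ := Submodule.mem_span_singleton.mp hz
    have hcoord : x D = y D + c * (eta D) D := by
      rw [← hxyz]; simp [Finsupp.add_apply, Finsupp.smul_apply, smul_eq_mul]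
    rw [hU x hx, hV y hy, zero_add, etaD_coord hD, mul_one] at hcoord
    rw [← hxyz, ← hcoord, zero_smul, add_zero]
    exact hy
  exact le_antisymm (main _ _ h1 h2 heq) (main _ _ h2 h1 heq.symm)

lemma EB_coordD (hC : IsS (D - 1) C) (hD1 : 1 ≤ D) : ∀ x ∈ EB C, x D = 0 :=
  EB_coord (fun p hp => by have := (IsS_bounds hC p hp).2.2; omega)

lemma EB_inj_small (hD : Odd D) {B1 B2 : Finset (ℕ × ℕ)}
    (hB1 : IsS D B1) (hB2 : IsS D B2)
    (hc1 : B1.card < (D - 1) / 2) (hc2 : B2.card < (D - 1) / 2)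
    (heq : EB B1 ⊔ Submodule.span (ZMod 2) {eta D}
      = EB B2 ⊔ Submodule.span (ZMod 2) {eta D}) : B1 = B2 := by
  have main : ∀ B1 B2 : Finset (ℕ × ℕ), IsS D B1 → IsS D B2 → B2.card < (D - 1) / 2 →
      EB B1 ⊔ Submodule.span (ZMod 2) {eta D} = EB B2 ⊔ Submodule.span (ZMod 2) {eta D} →
      B1 ⊆ B2 := by
    intro B1 B2 h1 h2 hcard hEq p hp
    obtain ⟨a, b⟩ := p
    have hb := IsS_bounds h1 _ hp
    refine rec_lemma h2 hD hcard a b hb.2.1 ?_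
    rw [← hEq]
    exact Submodule.mem_sup_left (eI_mem_EB hp)
  exact Finset.Subset.antisymm (main _ _ hB1 hB2 hc2 heq) (main _ _ hB2 hB1 hc1 heq.symm)

lemma IsS_mono' (hD : Odd D) (h : IsS (D - 1) C) : IsS D C := by
  have := IsS_mono h
  rwa [Nat.sub_add_cancel hD.pos] at this

lemma norm_desc (hD : Odd D)
    (hE : IsF (D - 1) E ∨ (IsF D E ∧ ¬ IsF (D - 1) E ∧
      Module.finrank (ZMod 2) E < (D - 1) / 2)) :
    (∃ C, IsS (D - 1) C ∧ E = EB C) ∨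
      (∃ B, IsS D B ∧ E = EB B ∧ B.card < (D - 1) / 2) := by
  rcases hE with h | ⟨h, _, hrk⟩
  · exact Or.inl (IsF_exists h)
  · obtain ⟨B, hB, rfl⟩ := IsF_exists h
    exact Or.inr ⟨B, hB, rfl, by rwa [findim_EB hB] at hrk⟩

theorem stmt17' (D : ℕ) (hD : Odd D) :
    Set.BijOn
      (fun E : Submodule (ZMod 2) Vec =>
        Submodule.map (Submodule.span (ZMod 2) {eta D}).mkQ E)
      {E | IsF (D - 1) E ∨
        (IsF D E ∧ ¬ IsF (D - 1) E ∧ Module.finrank (ZMod 2) E < (D - 1) / 2)}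
      {F | ∃ E : Submodule (ZMod 2) Vec, IsF D E ∧
        F = Submodule.map (Submodule.span (ZMod 2) {eta D}).mkQ E} := by
  constructor
  · -- MapsTo
    intro E hE
    simp only [Set.mem_setOf_eq] at hE ⊢
    refine ⟨E, ?_, rfl⟩
    rcases hE with h | ⟨h, _⟩
    · obtain ⟨C, hC, rfl⟩ := IsF_exists h
      exact IsF_of_IsS (IsS_mono' hD hC)
    · exact h
  constructor
  · -- InjOn
    intro E1 hE1 E2 hE2 hpi
    simp only [Set.mem_setOf_eq] at hE1 hE2
    have heq : E1 ⊔ Submodule.span (ZMod 2) {eta D}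
        = E2 ⊔ Submodule.span (ZMod 2) {eta D} := map_mkQ_eq.mp hpi
    rcases norm_desc hD hE1 with ⟨C1, hC1, rfl⟩ | ⟨B1, hB1, rfl, hc1⟩ <;>
      rcases norm_desc hD hE2 with ⟨C2, hC2, rfl⟩ | ⟨B2, hB2, rfl, hc2⟩
    · exact coordD_recover hD (EB_coordD hC1 hD.pos) (EB_coordD hC2 hD.pos) heq
    · -- class1 / class2
      have hC1D : IsS D C1 := IsS_mono' hD hC1
      have hη1 : eta D ∉ EB C1 := fun hmem => by
        have := EB_coordD hC1 hD.pos _ hmem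
        rw [etaD_coord hD] at this
        exact one_ne_zero this
      have hη2 : eta D ∉ EB B2 := eta_not_mem hB2 hD (by omega)
      haveI := fd_EB C1
      haveI := fd_EB B2
      have hr : Module.finrank (ZMod 2) (EB C1) + 1
          = Module.finrank (ZMod 2) (EB B2) + 1 := by
        rw [← finrank_sup_singleton hη1 (eta_nz hD), ← finrank_sup_singleton hη2 (eta_nz hD),
          heq]
      have hc1 : C1.card < (D - 1) / 2 := by
        have e1 := findim_EB hC1
        have e2 := findim_EB hB2
        omega
      rw [EB_inj_small hD hC1D hB2 hc1 hc2 heq]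
    · -- class2 / class1
      have hC2D : IsS D C2 := IsS_mono' hD hC2
      have hη2 : eta D ∉ EB C2 := fun hmem => by
        have := EB_coordD hC2 hD.pos _ hmem
        rw [etaD_coord hD] at this
        exact one_ne_zero this
      have hη1 : eta D ∉ EB B1 := eta_not_mem hB1 hD (by omega)
      haveI := fd_EB C2
      haveI := fd_EB B1
      have hr : Module.finrank (ZMod 2) (EB B1) + 1
          = Module.finrank (ZMod 2) (EB C2) + 1 := by
        rw [← finrank_sup_singleton hη1 (eta_nz hD), ← finrank_sup_singleton hη2 (eta_nz hD),
          heq]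
      have hc2 : C2.card < (D - 1) / 2 := by
        have e1 := findim_EB hC2
        have e2 := findim_EB hB1
        omega
      rw [EB_inj_small hD hB1 hC2D hc1 hc2 heq]
    · rw [EB_inj_small hD hB1 hB2 hc1 hc2 heq]
  · -- SurjOn
    intro F hF
    simp only [Set.mem_setOf_eq] at hF
    obtain ⟨E, hE, rfl⟩ := hF
    obtain ⟨B, hB, rfl⟩ := IsF_exists hE
    obtain ⟨B0, hside, heq⟩ := surj_lemma hB hD
    refine ⟨EB B0, ?_, map_mkQ_eq.mpr heq⟩
    simp only [Set.mem_setOf_eq]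
    rcases hside with hS | ⟨hS, hcard, ⟨a, b⟩, hp, hpD⟩
    · exact Or.inl (IsF_of_IsS hS)
    · refine Or.inr ⟨IsF_of_IsS hS, ?_, by rw [findim_EB hS]; exact hcard⟩
      intro hF'
      obtain ⟨C, hC, hEq⟩ := IsF_exists hF'
      have hmem : eI (a, b) ∈ EB C := by rw [← hEq]; exact eI_mem_EB hp
      have hz := EB_coordD hC hD.pos _ hmem
      have hb := IsS_bounds hS _ hp
      simp only at hpD hb
      rw [eI_apply, if_pos ⟨by omega, by omega⟩] at hz
      exact one_ne_zero hz

end Final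

/-- for odd `D`, `E ↦ π(E)` is a bijection from
`𝒻'(V_D) = 𝒻(V_{D-1}) ∪ {E ∈ 𝒻(V_D) \ 𝒻(V_{D-1}) : dim E < (D−1)/2}` onto
`𝒻(V'_D) = {π(E) : E ∈ 𝒻(V_D)}`, where `π : V_D → V_D/𝔽η_D`. -/
theorem stmt17 (D : ℕ) (hD : Odd D) :
    Set.BijOn
      (fun E : Submodule (ZMod 2) Vec =>
        Submodule.map (Submodule.span (ZMod 2) {eta D}).mkQ E)
      {E | IsF (D - 1) E ∨
        (IsF D E ∧ ¬ IsF (D - 1) E ∧ Module.finrank (ZMod 2) E < (D - 1) / 2)}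
      {F | ∃ E : Submodule (ZMod 2) Vec, IsF D E ∧
        F = Submodule.map (Submodule.span (ZMod 2) {eta D}).mkQ E} := stmt17' D hD
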